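/- For any two pure states |ψ⟩, |φ⟩ and Hermitian H, |F_Q[|ψ⟩;H] − F_Q[|φ⟩;H]| ≤ 24·√(1 − |⟨ψ|φ⟩|²)·‖H‖², where F_Q[|ψ⟩;H] = 4(⟨ψ|H²|ψ⟩ − ⟨ψ|H|ψ⟩²). -/

import Mathlib

open scoped BigOperators ComplexConjugate ComplexOrder Matrix

noncomputable section

/-- The rank-one projector `|ψ⟩⟨ψ|` as a matrix. -/
def projv {ι : Type*} [Fintype ι] (ψ : ι → ℂ) : Matrix ι ι ℂ :=
  Matrix.vecMulVec ψ (star ψ)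

/-- The inner product `⟨ψ|φ⟩`. -/
def ipc {ι : Type*} [Fintype ι] (ψ φ : ι → ℂ) : ℂ :=
  dotProduct (star ψ) φ

-- Square root of a positive semidefinite matrix (junk value `0` otherwise).
open Classical in
def msqrt {ι : Type*} [Fintype ι] [DecidableEq ι] (A : Matrix ι ι ℂ) : Matrix ι ι ℂ :=
  if h : A.PosSemidef then
    (h.1.eigenvectorUnitary : Matrix ι ι ℂ) *
      Matrix.diagonal ((↑) ∘ (√·) ∘ h.1.eigenvalues) *
      (star h.1.eigenvectorUnitary : Matrix ι ι ℂ)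
  else 0

/-- Trace norm `‖X‖₁ = Tr √(X†X)`. -/
def traceNorm {ι : Type*} [Fintype ι] [DecidableEq ι] (A : Matrix ι ι ℂ) : ℝ :=
  (msqrt (Aᴴ * A)).trace.re

/-- Uhlmann fidelity `F(ρ,σ) = Tr √(√σ ρ √σ)`. -/
def fid {ι : Type*} [Fintype ι] [DecidableEq ι] (ρ σ : Matrix ι ι ℂ) : ℝ :=
  (msqrt (msqrt σ * ρ * msqrt σ)).trace.re

/-- Operator (spectral) norm of a matrix. -/
def opNorm {ι : Type*} [Fintype ι] [DecidableEq ι] (A : Matrix ι ι ℂ) : ℝ :=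
  ‖Matrix.toEuclideanCLM (𝕜 := ℂ) A‖

/-- Expectation value `⟨ψ|H|ψ⟩` (real part). -/
def exval {ι : Type*} [Fintype ι] (ψ : ι → ℂ) (H : Matrix ι ι ℂ) : ℝ :=
  (ipc ψ (H.mulVec ψ)).re

/-- Pure-state quantum Fisher information `4(⟨H²⟩ - ⟨H⟩²)`. -/
def QFIpure {ι : Type*} [Fintype ι] (ψ : ι → ℂ) (H : Matrix ι ι ℂ) : ℝ :=
  4 * (exval ψ (H * H) - (exval ψ H) ^ 2)

/-- Density matrix predicate. -/
def IsDensity {ι : Type*} [Fintype ι] [DecidableEq ι] (ρ : Matrix ι ι ℂ) : Prop :=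
  ρ.PosSemidef ∧ ρ.trace = 1

section QFIaux
set_option linter.unusedSectionVars false

variable {ι : Type*} [Fintype ι] [DecidableEq ι]

lemma ipc_eq_inner' (x y : ι → ℂ) :
    ipc x y = inner ℂ ((WithLp.equiv 2 (ι → ℂ)).symm x) ((WithLp.equiv 2 (ι → ℂ)).symm y) := by
  simp [ipc, dotProduct, PiLp.inner_apply, mul_comm]

lemma ipc_conj' (x y : ι → ℂ) : ipc y x = conj (ipc x y) := by
  simp [ipc, dotProduct, map_sum]; ring_nf; simp [mul_comm]

lemma ipc_add_right' (x y z : ι → ℂ) : ipc x (y + z) = ipc x y + ipc x z := by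
  simp [ipc, dotProduct_add]

lemma ipc_smul_right' (a : ℂ) (x y : ι → ℂ) : ipc x (a • y) = a * ipc x y := by
  simp [ipc]

lemma ipc_sub_right' (x y z : ι → ℂ) : ipc x (y - z) = ipc x y - ipc x z := by
  simp [ipc, dotProduct_sub]

lemma ipc_add_left' (x y z : ι → ℂ) : ipc (x + y) z = ipc x z + ipc y z := by
  simp [ipc, add_dotProduct]

lemma ipc_smul_left' (a : ℂ) (x y : ι → ℂ) : ipc (a • x) y = conj a * ipc x y := by
  simp [ipc, star_smul, smul_dotProduct]

lemma ipc_sub_left' (x y z : ι → ℂ) : ipc (x - y) z = ipc x z - ipc y z := by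
  simp [ipc, sub_dotProduct]

lemma norm_of_ipc_one' {x : ι → ℂ} (hx : ipc x x = 1) :
    ‖(WithLp.equiv 2 (ι → ℂ)).symm x‖ = 1 := by
  have h := inner_self_eq_norm_sq (𝕜 := ℂ) ((WithLp.equiv 2 (ι → ℂ)).symm x)
  rw [← ipc_eq_inner', hx] at h
  simp only [RCLike.one_re] at h
  nlinarith [norm_nonneg ((WithLp.equiv 2 (ι → ℂ)).symm x)]

lemma ipc_mulVec_eq' (A : Matrix ι ι ℂ) (x y : ι → ℂ) :
    ipc x (A.mulVec y) = inner ℂ ((WithLp.equiv 2 (ι → ℂ)).symm x)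
      ((Matrix.toEuclideanCLM (𝕜 := ℂ) A) ((WithLp.equiv 2 (ι → ℂ)).symm y)) := by
  rw [show Matrix.toEuclideanCLM (𝕜 := ℂ) A ((WithLp.equiv 2 (ι → ℂ)).symm y) =
      (WithLp.equiv 2 (ι → ℂ)).symm (A *ᵥ y) from rfl, ← ipc_eq_inner']

lemma norm_cE_le' {x : ι → ℂ} (hx : ipc x x = 1) (A : Matrix ι ι ℂ) :
    ‖ipc x (A.mulVec x)‖ ≤ opNorm A := by
  rw [ipc_mulVec_eq']
  calc ‖inner ℂ ((WithLp.equiv 2 (ι → ℂ)).symm x) ((Matrix.toEuclideanCLM (𝕜 := ℂ) A) ((WithLp.equiv 2 (ι → ℂ)).symm x))‖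
      ≤ ‖(WithLp.equiv 2 (ι → ℂ)).symm x‖ * ‖(Matrix.toEuclideanCLM (𝕜 := ℂ) A) ((WithLp.equiv 2 (ι → ℂ)).symm x)‖ := norm_inner_le_norm _ _
    _ ≤ ‖(WithLp.equiv 2 (ι → ℂ)).symm x‖ * (opNorm A * ‖(WithLp.equiv 2 (ι → ℂ)).symm x‖) := by
        gcongr; exact (Matrix.toEuclideanCLM (𝕜 := ℂ) A).le_opNorm _
    _ = opNorm A := by rw [norm_of_ipc_one' hx]; ring

lemma ipc_norm_le' {x y : ι → ℂ} (hx : ipc x x = 1) (hy : ipc y y = 1) :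
    ‖ipc x y‖ ≤ 1 := by
  rw [ipc_eq_inner']
  calc ‖_‖ ≤ _ := norm_inner_le_norm _ _
    _ = 1 := by rw [norm_of_ipc_one' hx, norm_of_ipc_one' hy]; ring

lemma cE_expand' (A : Matrix ι ι ℂ) (a b : ℂ) (x y : ι → ℂ) :
    ipc (a • x + b • y) (A.mulVec (a • x + b • y)) =
      conj a * a * ipc x (A.mulVec x) + conj a * b * ipc x (A.mulVec y) +
      conj b * a * ipc y (A.mulVec x) + conj b * b * ipc y (A.mulVec y) := by
  simp only [Matrix.mulVec_add, Matrix.mulVec_smul, ipc_add_left', ipc_add_right',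
    ipc_smul_left', ipc_smul_right']
  ring

lemma ipc_expand' (a b c d : ℂ) (x y : ι → ℂ) :
    ipc (a • x + b • y) (c • x + d • y) =
      conj a * c * ipc x x + conj a * d * ipc x y +
      conj b * c * ipc y x + conj b * d * ipc y y := by
  simp only [ipc_add_left', ipc_add_right', ipc_smul_left', ipc_smul_right']
  ring

/-- Key continuity bound for expectation values:
`|⟨A⟩_ψ − ⟨A⟩_φ| ≤ 2‖A‖√(1−|⟨ψ|φ⟩|²)`. -/
lemma exval_diff_le' (ψ φ : ι → ℂ) (hψ : ipc ψ ψ = 1) (hφ : ipc φ φ = 1)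
    (A : Matrix ι ι ℂ) :
    |exval ψ A - exval φ A| ≤ 2 * opNorm A * Real.sqrt (1 - ‖ipc ψ φ‖ ^ 2) := by
  set c : ℝ := ‖ipc ψ φ‖ with hcdef
  have hc0 : 0 ≤ c := norm_nonneg _
  have hc1 : c ≤ 1 := ipc_norm_le' hψ hφ
  set lam : ℂ := if ipc ψ φ = 0 then 1 else (c : ℂ) / ipc ψ φ with hlamdef
  have hlamnorm : ‖lam‖ = 1 := by
    rw [hlamdef]
    split_ifs with h
    · simp
    · rw [norm_div, Complex.norm_real, Real.norm_of_nonneg hc0, hcdef,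
        div_self (by simpa using h)]
  have hlamconj : conj lam * lam = 1 := by
    rw [mul_comm, Complex.mul_conj, Complex.normSq_eq_norm_sq,
      hlamnorm]
    norm_num
  set φ2 := lam • φ with hφ2def
  clear_value lam
  clear_value φ2
  have hψφ2 : ipc ψ φ2 = (c : ℂ) := by
    rw [hφ2def, ipc_smul_right', hlamdef]
    split_ifs with h
    · simp [h, hcdef]
    · field_simp
  have hφ2φ2 : ipc φ2 φ2 = 1 := by
    rw [hφ2def, ipc_smul_left', ipc_smul_right', hφ, mul_one]
    exact hlamconj
  have hEφ2 : ipc φ2 (A.mulVec φ2) = ipc φ (A.mulVec φ) := by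
    rw [hφ2def, Matrix.mulVec_smul, ipc_smul_left', ipc_smul_right', ← mul_assoc,
      hlamconj, one_mul]
  set s : ℝ := Real.sqrt (1 - c ^ 2) with hsdef
  have hs0 : 0 ≤ s := Real.sqrt_nonneg _
  have hs2 : s ^ 2 = 1 - c ^ 2 := Real.sq_sqrt (by nlinarith)
  rcases eq_or_lt_of_le hc1 with hc | hclt
  · -- c = 1 : states coincide up to phase
    have hzero : ipc (ψ - φ2) (ψ - φ2) = 0 := by
      rw [ipc_sub_left', ipc_sub_right', ipc_sub_right', hψ, hφ2φ2, hψφ2,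
        ipc_conj' ψ φ2, hψφ2]
      rw [Complex.conj_ofReal, hc]
      push_cast
      ring
    have : (WithLp.equiv 2 (ι → ℂ)).symm (ψ - φ2) = 0 := by
      rw [← inner_self_eq_zero (𝕜 := ℂ), ← ipc_eq_inner', hzero]
    have hψeq : ψ = φ2 := by
      have := congrArg (WithLp.equiv 2 (ι → ℂ)) this
      simp at this
      linear_combination (norm := module) this
    have : exval ψ A = exval φ A := by
      rw [exval, exval, hψeq, hEφ2]
    rw [this, sub_self, abs_zero]
    exact mul_nonneg (mul_nonneg (by norm_num) (norm_nonneg _)) (Real.sqrt_nonneg _)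
  · -- c < 1 : genuine decomposition
    have hspos : 0 < s := Real.sqrt_pos.mpr (by nlinarith)
    set χ : ι → ℂ := φ2 - (c : ℂ) • ψ with hχdef
    clear_value χ
    have hψχ : ipc ψ χ = 0 := by
      rw [hχdef, ipc_sub_right', ipc_smul_right', hψφ2, hψ]; ring
    have hχχ : ipc χ χ = ((s : ℝ) : ℂ) ^ 2 := by
      rw [hχdef, ipc_sub_left', ipc_sub_right', ipc_sub_right', ipc_smul_right',
        ipc_smul_left', ipc_smul_right', ipc_smul_left', hφ2φ2, hψφ2, hψ,
        ipc_conj' ψ φ2, hψφ2]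
      simp only [Complex.conj_ofReal]
      have e : ((s : ℝ) : ℂ) ^ 2 = 1 - ((c : ℝ) : ℂ) ^ 2 :=
        by exact_mod_cast congrArg Complex.ofReal hs2
      linear_combination -e
    set χu : ι → ℂ := ((s⁻¹ : ℝ) : ℂ) • χ with hχudef
    clear_value χu
    have hχuχu : ipc χu χu = 1 := by
      rw [hχudef, ipc_smul_left', ipc_smul_right', hχχ, Complex.conj_ofReal]
      push_cast
      field_simp
    have hψχu : ipc ψ χu = 0 := by
      rw [hχudef, ipc_smul_right', hψχ, mul_zero]
    have hχuψ : ipc χu ψ = 0 := by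
      rw [ipc_conj' ψ χu, hψχu, map_zero]
    have hφ2eq : φ2 = (c : ℂ) • ψ + ((s : ℝ) : ℂ) • χu := by
      rw [hχudef, smul_smul]
      have : ((s : ℝ) : ℂ) * ((s⁻¹ : ℝ) : ℂ) = 1 := by
        push_cast; field_simp
      rw [this, one_smul, hχdef]
      module
    set θ : ℝ := -(Real.arcsin c) / 2 with hθdef
    set co : ℝ := Real.cos θ with hcodef
    set si : ℝ := Real.sin θ with hsidef
    have h1 : co ^ 2 + si ^ 2 = 1 := by
      rw [hcodef, hsidef, add_comm]; exact Real.sin_sq_add_cos_sq θ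
    have h2 : co ^ 2 - si ^ 2 = s := by
      rw [hcodef, hsidef, ← Real.cos_two_mul']
      have : 2 * θ = -(Real.arcsin c) := by rw [hθdef]; ring
      rw [this, Real.cos_neg, Real.cos_arcsin, hsdef]
    have h3 : 2 * si * co = -c := by
      have := Real.sin_two_mul θ
      have h2θ : 2 * θ = -(Real.arcsin c) := by rw [hθdef]; ring
      rw [h2θ, Real.sin_neg, Real.sin_arcsin (by linarith) hc1] at this
      rw [hsidef, hcodef]; linarith [this]
    set f : ι → ℂ := ((co : ℝ) : ℂ) • ψ + ((si : ℝ) : ℂ) • χu with hfdef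
    clear_value f
    set g : ι → ℂ := ((-si : ℝ) : ℂ) • ψ + ((co : ℝ) : ℂ) • χu with hgdef
    clear_value g
    have hff : ipc f f = 1 := by
      rw [hfdef, ipc_expand', hψ, hχuχu, hψχu, hχuψ]
      simp only [Complex.conj_ofReal, mul_zero, zero_mul, mul_one, add_zero, zero_add]
      have e1 : ((co : ℝ) : ℂ) ^ 2 + ((si : ℝ) : ℂ) ^ 2 = 1 :=
        by exact_mod_cast congrArg Complex.ofReal h1
      linear_combination e1
    have hgg : ipc g g = 1 := by
      rw [hgdef, ipc_expand', hψ, hχuχu, hψχu, hχuψ]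
      simp only [Complex.conj_ofReal, mul_zero, zero_mul, mul_one, add_zero, zero_add]
      have e1 : ((co : ℝ) : ℂ) ^ 2 + ((si : ℝ) : ℂ) ^ 2 = 1 :=
        by exact_mod_cast congrArg Complex.ofReal h1
      push_cast
      linear_combination e1
    -- the key algebraic identity
    have hkey : ipc ψ (A.mulVec ψ) - ipc φ2 (A.mulVec φ2) =
        ((s : ℝ) : ℂ) * (ipc f (A.mulVec f) - ipc g (A.mulVec g)) := by
      rw [hφ2eq, hfdef, hgdef, cE_expand', cE_expand', cE_expand']
      simp only [Complex.conj_ofReal]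
      have e2 : ((co : ℝ) : ℂ) ^ 2 - ((si : ℝ) : ℂ) ^ 2 = ((s : ℝ) : ℂ) := by
        exact_mod_cast congrArg (Complex.ofReal) h2
      have e3 : 2 * ((si : ℝ) : ℂ) * ((co : ℝ) : ℂ) = -((c : ℝ) : ℂ) := by
        exact_mod_cast congrArg (Complex.ofReal) h3
      have e4 : ((s : ℝ) : ℂ) ^ 2 = 1 - ((c : ℝ) : ℂ) ^ 2 := by
        exact_mod_cast congrArg (Complex.ofReal) hs2
      push_cast
      linear_combination (- ipc ψ (A.mulVec ψ)) * e4 +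
        (((s : ℝ) : ℂ) * ipc χu (A.mulVec χu) - ((s : ℝ) : ℂ) * ipc ψ (A.mulVec ψ)) * e2 +
        (-(((s : ℝ) : ℂ) * (ipc ψ (A.mulVec χu) + ipc χu (A.mulVec ψ)))) * e3
    -- assemble the bound
    have hb1 : ‖ipc f (A.mulVec f)‖ ≤ opNorm A := norm_cE_le' hff A
    have hb2 : ‖ipc g (A.mulVec g)‖ ≤ opNorm A := norm_cE_le' hgg A
    have : exval ψ A - exval φ A = (ipc ψ (A.mulVec ψ) - ipc φ2 (A.mulVec φ2)).re := by
      rw [exval, exval, ← hEφ2, Complex.sub_re]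
    rw [this, hkey]
    calc |(((s : ℝ) : ℂ) * (ipc f (A.mulVec f) - ipc g (A.mulVec g))).re|
        ≤ ‖((s : ℝ) : ℂ) * (ipc f (A.mulVec f) - ipc g (A.mulVec g))‖ :=
          Complex.abs_re_le_norm _
      _ = s * ‖ipc f (A.mulVec f) - ipc g (A.mulVec g)‖ := by
          rw [norm_mul, Complex.norm_real, Real.norm_of_nonneg hs0]
      _ ≤ s * (‖ipc f (A.mulVec f)‖ + ‖ipc g (A.mulVec g)‖) := by
          gcongr; exact norm_sub_le _ _
      _ ≤ s * (opNorm A + opNorm A) := by gcongr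
      _ = 2 * opNorm A * s := by ring

end QFIaux

/-- continuity of the pure-state QFI in fidelity:
`|F_Q[ψ;H] − F_Q[φ;H]| ≤ 24 √(1 − |⟨ψ|φ⟩|²) ‖H‖²`. -/
theorem QFIpure_continuity_fidelity {n : ℕ} (ψ φ : Fin n → ℂ)
    (hψ : ipc ψ ψ = 1) (hφ : ipc φ φ = 1)
    (H : Matrix (Fin n) (Fin n) ℂ) (hH : H.IsHermitian) :
    |QFIpure ψ H - QFIpure φ H| ≤ 24 * Real.sqrt (1 - ‖ipc ψ φ‖ ^ 2) * opNorm H ^ 2 := by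
  set D : ℝ := Real.sqrt (1 - ‖ipc ψ φ‖ ^ 2) with hDdef
  have hD0 : 0 ≤ D := Real.sqrt_nonneg _
  set N : ℝ := opNorm H with hNdef
  have hN0 : 0 ≤ N := norm_nonneg _
  have hHH : opNorm (H * H) ≤ N * N := by
    rw [hNdef, opNorm, opNorm, map_mul]
    exact norm_mul_le _ _
  have h2 := exval_diff_le' ψ φ hψ hφ (H * H)
  have h1 := exval_diff_le' ψ φ hψ hφ H
  have hb1 : |exval ψ H| ≤ N := by
    calc |exval ψ H| ≤ ‖ipc ψ (H.mulVec ψ)‖ := Complex.abs_re_le_norm _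
      _ ≤ N := norm_cE_le' hψ H
  have hb2 : |exval φ H| ≤ N := by
    calc |exval φ H| ≤ ‖ipc φ (H.mulVec φ)‖ := Complex.abs_re_le_norm _
      _ ≤ N := norm_cE_le' hφ H
  set a1 := exval ψ H
  set b1 := exval φ H
  set a2 := exval ψ (H * H)
  set b2 := exval φ (H * H)
  have e1 : |a1 ^ 2 - b1 ^ 2| ≤ 4 * N ^ 2 * D := by
    have hfac : a1 ^ 2 - b1 ^ 2 = (a1 - b1) * (a1 + b1) := by ring
    rw [hfac, abs_mul]
    have hsum : |a1 + b1| ≤ 2 * N := (abs_add_le _ _).trans (by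
      have := abs_le.mp hb1
      have := abs_le.mp hb2
      linarith [hb1, hb2])
    nlinarith [abs_nonneg (a1 - b1), abs_nonneg (a1 + b1)]
  have e2 : |a2 - b2| ≤ 2 * N ^ 2 * D := by
    refine h2.trans ?_
    have h0 : 0 ≤ opNorm (H * H) := norm_nonneg _
    nlinarith
  have hq : QFIpure ψ H - QFIpure φ H = 4 * ((a2 - b2) - (a1 ^ 2 - b1 ^ 2)) := by
    simp only [QFIpure]; ring
  rw [hq]
  calc |4 * ((a2 - b2) - (a1 ^ 2 - b1 ^ 2))|
      = 4 * |(a2 - b2) - (a1 ^ 2 - b1 ^ 2)| := by rw [abs_mul]; norm_num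
    _ ≤ 4 * (|a2 - b2| + |a1 ^ 2 - b1 ^ 2|) := by
        have := abs_sub (a2 - b2) (a1 ^ 2 - b1 ^ 2)
        linarith
    _ ≤ 4 * (2 * N ^ 2 * D + 4 * N ^ 2 * D) := by linarith
    _ = 24 * D * N ^ 2 := by ring
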